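/- In the dcpo of countable-support sub-probability distributions on a countable set S ordered pointwise, the way-below relation satisfies: if μ has finite support and μ(x) < ν(x) for every x in the support of μ, then μ is way below ν (μ ≪ ν), i.e., for every directed set D with ν ≤ sup D there exists ρ ∈ D with μ ≤ ρ. -/
import Mathlib

open scoped ENNReal

/-- A discrete sub-probability distribution: total mass at most 1. -/
def SubDist {S : Type*} (μ : S → ℝ≥0∞) : Prop := ∑' x, μ x ≤ 1

/-- Probabilistic lifting of a relation via a matching (coupling). -/
def Lift {S : Type*} (R : S → S → Prop) (μ ν : S → ℝ≥0∞) : Prop :=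
  ∃ m : S → S → ℝ≥0∞,
    (∀ x y, m x y ≠ 0 → R x y) ∧
    (∀ x, (∑' y, m x y) = μ x) ∧
    (∀ y, (∑' x, m x y) ≤ ν y)

/-- A finitely supported sub-distribution strictly below `ν` on its support is
way below `ν`. -/
theorem stmt4 {S : Type*} [Countable S] (μ ν : S → ℝ≥0∞)
    (hμ : SubDist μ) (hν : SubDist ν)
    (hfin : (Function.support μ).Finite)
    (hlt : ∀ x, μ x ≠ 0 → μ x < ν x)
    (D : Set (S → ℝ≥0∞)) (hne : D.Nonempty)
    (hdir : DirectedOn (fun a b => ∀ x, a x ≤ b x) D)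
    (hsub : ∀ ρ ∈ D, SubDist ρ)
    (hle : ∀ x, ν x ≤ ⨆ ρ ∈ D, ρ x) :
    ∃ ρ ∈ D, ∀ x, μ x ≤ ρ x := by
  -- Main claim: for any finset T, if each point of T is covered by some element
  -- of D, then some single element of D covers all of T.
  classical
  have claim : ∀ T : Finset S, (∀ x ∈ T, ∃ ρ ∈ D, μ x ≤ ρ x) →
      ∃ ρ ∈ D, ∀ x ∈ T, μ x ≤ ρ x := by
    intro T
    induction T using Finset.induction_on with
    | empty => intro _; obtain ⟨ρ, hρ⟩ := hne; exact ⟨ρ, hρ, by simp⟩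
    | @insert a T ha ih =>
      intro h
      obtain ⟨ρa, hρaD, hρa⟩ := h a (Finset.mem_insert_self a T)
      obtain ⟨ρT, hρTD, hρT⟩ := ih fun x hx => h x (Finset.mem_insert_of_mem hx)
      obtain ⟨ρ, hρD, hle1, hle2⟩ := hdir ρa hρaD ρT hρTD
      refine ⟨ρ, hρD, fun x hx => ?_⟩
      rcases Finset.mem_insert.1 hx with rfl | hx
      · exact hρa.trans (hle1 x)
      · exact (hρT x hx).trans (hle2 x)
  obtain ⟨ρ, hρD, hρ⟩ := claim hfin.toFinset (by
    intro x hx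
    have hx' : μ x ≠ 0 := hfin.mem_toFinset.1 hx
    have h1 : μ x < ⨆ ρ ∈ D, ρ x := (hlt x hx').trans_le (hle x)
    rw [lt_iSup_iff] at h1
    obtain ⟨ρ, hρ⟩ := h1
    rw [lt_iSup_iff] at hρ
    obtain ⟨hρD, hρ⟩ := hρ
    exact ⟨ρ, hρD, hρ.le⟩)
  refine ⟨ρ, hρD, fun x => ?_⟩
  by_cases hx : μ x = 0
  · simp [hx]
  · exact hρ x (hfin.mem_toFinset.2 hx)
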